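/- Let e := (q₁ + q₂)/√2 in ℂ², B̃₁ := ee* =: C̃₁, B̃₂ := 2q₁q₁* + q₂q₂*, C̃₂ := q₁q₁*. Then the sum of the 2 largest eigenvalues of B̃₁^↓ ⊗ C̃₁ + B̃₂^↓ ⊗ C̃₂ is strictly less than the sum of the 2 largest eigenvalues of B̃₁ ⊗ C̃₁ + B̃₂ ⊗ C̃₂ (their difference is less than −0.05). Hence B̃₁ ⊗ C̃₁ + B̃₂ ⊗ C̃₂ is not majorized by B̃₁^↓ ⊗ C̃₁ + B̃₂^↓ ⊗ C̃₂. -/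

import Mathlib

open Matrix Kronecker

/-- Sum of the `k` largest values of `f` (as the sup of sums over `k`-subsets). -/
noncomputable def sk {ι : Type*} [Fintype ι] (f : ι → ℝ) (k : ℕ) : ℝ :=
  sSup {x | ∃ S : Finset ι, S.card = k ∧ x = ∑ i ∈ S, f i}

lemma le_sk {ι : Type*} [Fintype ι] (f : ι → ℝ) (k : ℕ) (S : Finset ι)
    (hS : S.card = k) : ∑ i ∈ S, f i ≤ sk f k := by
  apply le_csSup
  · exact Set.Finite.bddAbove <| Set.Finite.subset
      (Set.finite_range fun T : Finset ι => ∑ i ∈ T, f i)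
      (by rintro x ⟨T, _, rfl⟩; exact ⟨T, rfl⟩)
  · exact ⟨S, hS, rfl⟩

lemma sk_le {ι : Type*} [Fintype ι] (f : ι → ℝ) (k : ℕ) (c : ℝ)
    (S₀ : Finset ι) (hS₀ : S₀.card = k)
    (h : ∀ S : Finset ι, S.card = k → ∑ i ∈ S, f i ≤ c) : sk f k ≤ c := by
  apply csSup_le
  · exact ⟨_, S₀, hS₀, rfl⟩
  · rintro x ⟨S, hS, rfl⟩; exact h S hS

lemma key {n : Type*} [Fintype n] [DecidableEq n] {A : Matrix n n ℂ} (hA : A.IsHermitian)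
    (x : ℝ) : ((∏ i, (x - hA.eigenvalues i) : ℝ) : ℂ) = ((x : ℂ) • 1 - A).det := by
  conv_rhs => rw [hA.spectral_theorem, Unitary.conjStarAlgAut_apply]
  have hU : (hA.eigenvectorUnitary : Matrix n n ℂ) * star (hA.eigenvectorUnitary : Matrix n n ℂ) = 1 :=
    (Matrix.mem_unitaryGroup_iff).mp hA.eigenvectorUnitary.2
  have h1 : (x : ℂ) • (1 : Matrix n n ℂ)
      - (hA.eigenvectorUnitary : Matrix n n ℂ) * diagonal (RCLike.ofReal ∘ hA.eigenvalues)
        * star (hA.eigenvectorUnitary : Matrix n n ℂ)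
      = (hA.eigenvectorUnitary : Matrix n n ℂ)
        * ((x:ℂ) • 1 - diagonal (RCLike.ofReal ∘ hA.eigenvalues))
        * star (hA.eigenvectorUnitary : Matrix n n ℂ) := by
    rw [Matrix.mul_sub, Matrix.sub_mul, mul_assoc]
    congr 1
    rw [Matrix.mul_smul, mul_one, Matrix.smul_mul, hU]
  rw [h1, det_mul_right_comm, hU, one_mul]
  have h2 : (x : ℂ) • (1 : Matrix n n ℂ) - diagonal (RCLike.ofReal ∘ hA.eigenvalues)
      = diagonal (fun i => (x : ℂ) - hA.eigenvalues i) := by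
    rw [smul_one_eq_diagonal, diagonal_sub]; rfl
  rw [h2, det_diagonal]
  push_cast
  rfl

lemma trace_key {n : Type*} [Fintype n] [DecidableEq n] {A : Matrix n n ℂ}
    (hA : A.IsHermitian) : A.trace = ((∑ i, hA.eigenvalues i : ℝ) : ℂ) := by
  conv_lhs => rw [hA.spectral_theorem, Unitary.conjStarAlgAut_apply]
  rw [Matrix.trace_mul_cycle, Unitary.coe_star_mul_self, one_mul, Matrix.trace_diagonal]
  push_cast
  rfl

lemma exists_root_between {ι : Type*} [Fintype ι] (f : ι → ℝ) (a b : ℝ) (hab : a < b)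
    (h : (∏ i, (a - f i)) * (∏ i, (b - f i)) < 0) : ∃ i, a < f i ∧ f i < b := by
  by_contra hc
  push_neg at hc
  have : (0:ℝ) ≤ (∏ i, (a - f i)) * (∏ i, (b - f i)) := by
    rw [← Finset.prod_mul_distrib]
    apply Finset.prod_nonneg
    intro i _
    rcases le_or_gt (f i) a with h1 | h1
    · have : 0 < b - f i := by linarith
      nlinarith
    · have h2 := hc i h1
      nlinarith
  linarith

def e4 : Fin 2 × Fin 2 ≃ Fin 4 := finProdFinEquiv.trans (finCongr rfl)

lemma detA (x : ℝ) : ((x : ℂ) • 1 - (((2 : ℂ)⁻¹ • !![1, 1; 1, 1]) ⊗ₖ ((2 : ℂ)⁻¹ • !![1, 1; 1, 1])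
      + Matrix.diagonal ![(2 : ℂ), 1] ⊗ₖ Matrix.diagonal ![(1 : ℂ), 0])).det
    = ((x^4 - 4*x^3 + (17/4)*x^2 - x : ℝ) : ℂ) := by
  have h0 : ((x : ℂ) • 1 - (((2 : ℂ)⁻¹ • !![1, 1; 1, 1]) ⊗ₖ ((2 : ℂ)⁻¹ • !![1, 1; 1, 1])
      + Matrix.diagonal ![(2 : ℂ), 1] ⊗ₖ Matrix.diagonal ![(1 : ℂ), 0]))
      = (!![x - 9/4, -(1/4), -(1/4), -(1/4);
           -(1/4), x - 1/4, -(1/4), -(1/4);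
           -(1/4), -(1/4), x - 5/4, -(1/4);
           -(1/4), -(1/4), -(1/4), x - 1/4] : Matrix (Fin 4) (Fin 4) ℂ).submatrix e4 e4 := by
    ext ⟨i, j⟩ ⟨k, l⟩
    fin_cases i <;> fin_cases j <;> fin_cases k <;> fin_cases l <;>
      norm_num [e4, Matrix.kroneckerMap_apply, Matrix.one_apply, finProdFinEquiv,
        Prod.ext_iff, Fin.ext_iff, Matrix.vecHead, Matrix.vecTail]
  rw [h0, Matrix.det_submatrix_equiv_self]
  rw [Matrix.det_succ_row_zero]
  simp [Fin.sum_univ_succ, Matrix.det_fin_three, Fin.succAbove,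
    show (Fin.castSucc 2 : Fin 4) = 2 from rfl]
  push_cast
  ring

lemma detA' (x : ℝ) : ((x : ℂ) • 1 - (Matrix.diagonal ![(1 : ℂ), 0] ⊗ₖ ((2 : ℂ)⁻¹ • !![1, 1; 1, 1])
      + Matrix.diagonal ![(2 : ℂ), 1] ⊗ₖ Matrix.diagonal ![(1 : ℂ), 0])).det
    = ((x^4 - 4*x^3 + 4*x^2 - x : ℝ) : ℂ) := by
  have h0 : ((x : ℂ) • 1 - (Matrix.diagonal ![(1 : ℂ), 0] ⊗ₖ ((2 : ℂ)⁻¹ • !![1, 1; 1, 1])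
      + Matrix.diagonal ![(2 : ℂ), 1] ⊗ₖ Matrix.diagonal ![(1 : ℂ), 0]))
      = (!![x - 5/2, -(1/2), 0, 0;
           -(1/2), x - 1/2, 0, 0;
           0, 0, x - 1, 0;
           0, 0, 0, (x:ℂ)] : Matrix (Fin 4) (Fin 4) ℂ).submatrix e4 e4 := by
    ext ⟨i, j⟩ ⟨k, l⟩
    fin_cases i <;> fin_cases j <;> fin_cases k <;> fin_cases l <;>
      norm_num [e4, Matrix.kroneckerMap_apply, Matrix.one_apply, finProdFinEquiv,
        Prod.ext_iff, Fin.ext_iff, Matrix.vecHead, Matrix.vecTail]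
  rw [h0, Matrix.det_submatrix_equiv_self]
  rw [Matrix.det_succ_row_zero]
  simp [Fin.sum_univ_succ, Matrix.det_fin_three, Fin.succAbove,
    show (Fin.castSucc 2 : Fin 4) = 2 from rfl]
  push_cast
  ring

lemma traceA' : (Matrix.diagonal ![(1 : ℂ), 0] ⊗ₖ ((2 : ℂ)⁻¹ • !![1, 1; 1, 1])
      + Matrix.diagonal ![(2 : ℂ), 1] ⊗ₖ Matrix.diagonal ![(1 : ℂ), 0]).trace = 4 := by
  simp only [Matrix.trace, Matrix.diag]
  rw [Fintype.sum_prod_type]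
  norm_num [Fin.sum_univ_succ, Matrix.kroneckerMap_apply]

/-- Counterexample to aligning only one factor: with `B̃₁ = C̃₁ = ee*` (`e = (q₁+q₂)/√2`),
`B̃₂ = diag(2,1)`, `C̃₂ = diag(1,0)` (so `B̃₁^↓ = diag(1,0)` and `B̃₂^↓ = B̃₂`),
`s₂(B̃₁^↓⊗C̃₁ + B̃₂^↓⊗C̃₂) - s₂(B̃₁⊗C̃₁ + B̃₂⊗C̃₂) < -0.05`; hence
`B̃₁⊗C̃₁ + B̃₂⊗C̃₂` is not majorized by `B̃₁^↓⊗C̃₁ + B̃₂^↓⊗C̃₂`. -/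
theorem stmt13
    (hA : (((2 : ℂ)⁻¹ • !![1, 1; 1, 1]) ⊗ₖ ((2 : ℂ)⁻¹ • !![1, 1; 1, 1])
      + Matrix.diagonal ![(2 : ℂ), 1] ⊗ₖ Matrix.diagonal ![(1 : ℂ), 0]).IsHermitian)
    (hA' : (Matrix.diagonal ![(1 : ℂ), 0] ⊗ₖ ((2 : ℂ)⁻¹ • !![1, 1; 1, 1])
      + Matrix.diagonal ![(2 : ℂ), 1] ⊗ₖ Matrix.diagonal ![(1 : ℂ), 0]).IsHermitian) :
    sk hA'.eigenvalues 2 - sk hA.eigenvalues 2 < -0.05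
    ∧ ¬ ((∀ k ≤ 4, sk hA.eigenvalues k ≤ sk hA'.eigenvalues k)
          ∧ sk hA.eigenvalues 4 = sk hA'.eigenvalues 4) := by
  set f := hA.eigenvalues with hf
  set g := hA'.eigenvalues with hg
  -- product formulas
  have hpf : ∀ x : ℝ, ∏ i, (x - f i) = x^4 - 4*x^3 + (17/4)*x^2 - x := by
    intro x
    have h := key hA x
    rw [detA x] at h
    exact_mod_cast h
  have hpg : ∀ x : ℝ, ∏ i, (x - g i) = x^4 - 4*x^3 + 4*x^2 - x := by
    intro x
    have h := key hA' x
    rw [detA' x] at h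
    exact_mod_cast h
  -- trace of A'
  have htr : ∑ i, g i = 4 := by
    have h := trace_key hA'
    rw [traceA'] at h
    exact_mod_cast h.symm
  -- sqrt 5 facts
  set s := Real.sqrt 5 with hs
  have hs2 : s^2 = 5 := Real.sq_sqrt (by norm_num)
  have hs0 : 0 ≤ s := Real.sqrt_nonneg 5
  -- roots of A in intervals
  obtain ⟨i₁, hi₁l, hi₁r⟩ : ∃ i, (1.264:ℝ) < f i ∧ f i < 1.265 := by
    apply exists_root_between f _ _ (by norm_num)
    rw [hpf, hpf]; norm_num
  obtain ⟨i₂, hi₂l, hi₂r⟩ : ∃ i, (2.406:ℝ) < f i ∧ f i < 2.408 := by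
    apply exists_root_between f _ _ (by norm_num)
    rw [hpf, hpf]; norm_num
  have hne : i₁ ≠ i₂ := by
    intro h; rw [h] at hi₁r; linarith
  -- lower bound on sk f 2
  have hlow : (3.67:ℝ) < sk f 2 := by
    have h1 : f i₁ + f i₂ ≤ sk f 2 := by
      have := le_sk f 2 {i₁, i₂} (Finset.card_pair hne)
      rwa [Finset.sum_pair hne] at this
    linarith
  -- eigenvalue classification for A'
  have hroots : ∀ i, 0 ≤ g i ∧ (g i ≤ 1 ∨ g i = (3 + s)/2) := by
    intro i
    have h0 : ∏ k, (g i - g k) = 0 :=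
      Finset.prod_eq_zero (Finset.mem_univ i) (sub_self _)
    rw [hpg] at h0
    have h1 : g i * ((g i - 1) * ((g i)^2 - 3*(g i) + 1)) = 0 := by ring_nf; linarith [h0]
    rcases mul_eq_zero.mp h1 with h2 | h2
    · constructor
      · linarith
      · left; linarith
    rcases mul_eq_zero.mp h2 with h3 | h3
    · constructor
      · linarith
      · left; linarith
    · -- quadratic: (2y-3)^2 = 5
      have h4 : (2*(g i) - 3)^2 = s^2 := by rw [hs2]; nlinarith
      rcases sq_eq_sq_iff_eq_or_eq_neg.mp h4 with h5 | h5
      · constructor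
        · nlinarith
        · right; linarith
      · constructor
        · nlinarith
        · left; nlinarith
  -- at most one eigenvalue equals (3+s)/2
  have hmul : ∀ i j, g i = (3 + s)/2 → g j = (3 + s)/2 → i = j := by
    intro i j hi hj
    by_contra hij
    have hsum : g i + g j ≤ ∑ k, g k := by
      have := Finset.sum_le_sum_of_subset_of_nonneg
        (Finset.subset_univ ({i, j} : Finset _))
        (fun k _ _ => (hroots k).1)
      rwa [Finset.sum_pair hij] at this
    rw [htr, hi, hj] at hsum
    nlinarith
  -- upper bound on sk g 2
  have hup : sk g 2 ≤ (3 + s)/2 + 1 := by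
    apply sk_le g 2 _ ({((0:Fin 2),(0:Fin 2)), ((0:Fin 2),(1:Fin 2))}) (by decide)
    intro S hS
    obtain ⟨i, j, hij, rfl⟩ := Finset.card_eq_two.mp hS
    rw [Finset.sum_pair hij]
    rcases (hroots i).2 with hi | hi <;> rcases (hroots j).2 with hj | hj
    · nlinarith
    · rw [hj]; linarith
    · rw [hi]; linarith
    · exact absurd (hmul i j hi hj) hij
  constructor
  · nlinarith
  · rintro ⟨H, _⟩
    have := H 2 (by norm_num)
    nlinarith
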